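/- For every nonnegative integer k, all nonzero complex numbers a, b and every complex number b′, the series b^k·Σ_{j=0}^∞ (ab′)^j·(ab)^{−min(k,j)}·L_{min(k,j)}^{|k−j|}(−ab)/max(k,j)! converges absolutely and equals e^{ab′}·(b+b′)^k/k!. -/

import Mathlib

open scoped BigOperators

/-- Generalized Laguerre polynomial `L_n^m(x) = Σ_{q=0}^n C(n+m, n−q)·(−x)^q/q!`. -/
noncomputable def lag (n m : ℕ) (x : ℂ) : ℂ :=
  ∑ q ∈ Finset.range (n + 1), ((n + m).choose (n - q) : ℂ) * (-x) ^ q / (q.factorial : ℂ)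

/-- The `r`-th slice of the expanded term. -/
noncomputable def gterm (a b b' : ℂ) (k r j : ℕ) : ℂ :=
  if r ≤ j then (a * b') ^ j * (a * b) ^ (-(r : ℤ)) * b ^ k /
      ((r.factorial : ℂ) * ((k - r).factorial : ℂ) * ((j - r).factorial : ℂ))
  else 0

lemma gterm_pointwise (a b b' : ℂ) (hab : a * b ≠ 0) (k j m M r : ℕ)
    (hr : r ≤ m) (hmM : m ≤ M) :
    b ^ k * ((a * b') ^ j * (a * b) ^ (-(m : ℤ)) *
      ((M.choose (m - (m - r)) : ℂ) * (a * b) ^ (m - r) / (((m - r).factorial : ℂ))) /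
      (M.factorial : ℂ)) =
    (a * b') ^ j * (a * b) ^ (-(r : ℤ)) * b ^ k /
      ((r.factorial : ℂ) * ((M - r).factorial : ℂ) * ((m - r).factorial : ℂ)) := by
  obtain ⟨s, rfl⟩ : ∃ s, m = r + s := ⟨m - r, by omega⟩
  obtain ⟨t, rfl⟩ : ∃ t, M = r + s + t := ⟨M - (r + s), by omega⟩
  have e1 : r + s - (r + s - r) = r := by omega
  have e2 : r + s - r = s := by omega
  have e3 : r + s + t - r = s + t := by omega
  rw [e1, e2, e3]
  have hch : ((r + s + t).choose r : ℂ) * (r.factorial : ℂ) * ((s + t).factorial : ℂ)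
      = ((r + s + t).factorial : ℂ) := by
    have := Nat.choose_mul_factorial_mul_factorial (show r ≤ r + s + t by omega)
    rw [show r + s + t - r = s + t from by omega] at this
    exact_mod_cast congrArg (Nat.cast : ℕ → ℂ) this
  have hz1 : (a * b) ^ (-((r + s : ℕ) : ℤ)) = ((a * b) ^ (r + s))⁻¹ := by
    rw [zpow_neg, zpow_natCast]
  have hz2 : (a * b) ^ (-(r : ℤ)) = ((a * b) ^ r)⁻¹ := by
    rw [zpow_neg, zpow_natCast]
  rw [hz1, hz2]
  have h1 : ((r + s + t).factorial : ℂ) ≠ 0 := Nat.cast_ne_zero.2 (Nat.factorial_ne_zero _)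
  have h2 : (r.factorial : ℂ) ≠ 0 := Nat.cast_ne_zero.2 (Nat.factorial_ne_zero _)
  have h3 : ((s + t).factorial : ℂ) ≠ 0 := Nat.cast_ne_zero.2 (Nat.factorial_ne_zero _)
  have h4 : (s.factorial : ℂ) ≠ 0 := Nat.cast_ne_zero.2 (Nat.factorial_ne_zero _)
  have hp1 : (a * b) ^ (r + s) ≠ 0 := pow_ne_zero _ hab
  have hp2 : (a * b) ^ r ≠ 0 := pow_ne_zero _ hab
  field_simp
  rw [← hch]
  ring

lemma term_eq (k : ℕ) (a b b' : ℂ) (hab : a * b ≠ 0) (j : ℕ) :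
    b ^ k * ((a * b') ^ j * (a * b) ^ (-(min k j : ℤ)) *
      lag (min k j) (Nat.dist k j) (-(a * b)) / ((max k j).factorial : ℂ)) =
    ∑ r ∈ Finset.range (k + 1), gterm a b b' k r j := by
  simp only [← Nat.cast_min]
  have hmM : min k j + Nat.dist k j = max k j := by
    simp only [Nat.dist]; omega
  -- RHS rewriting
  have hRHS : ∑ r ∈ Finset.range (k + 1), gterm a b b' k r j
      = ∑ r ∈ Finset.range (min k j + 1),
          (a * b') ^ j * (a * b) ^ (-(r : ℤ)) * b ^ k /
            ((r.factorial : ℂ) * ((max k j - r).factorial : ℂ) *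
              ((min k j - r).factorial : ℂ)) := by
    rw [show Finset.range (min k j + 1)
        = (Finset.range (k + 1)).filter (· ≤ j) from by
      ext r; simp [Finset.mem_filter, Finset.mem_range]]
    rw [Finset.sum_filter]
    refine Finset.sum_congr rfl fun r hr => ?_
    simp only [Finset.mem_range] at hr
    unfold gterm
    by_cases hrj : r ≤ j
    · have hfac : (r.factorial : ℂ) * ((k - r).factorial : ℂ) * ((j - r).factorial : ℂ)
          = (r.factorial : ℂ) * ((max k j - r).factorial : ℂ) * ((min k j - r).factorial : ℂ) := by
        rcases le_total k j with h | h
        · rw [max_eq_right h, min_eq_left h]; ring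
        · rw [max_eq_left h, min_eq_right h]
      rw [if_pos hrj, hfac]
      try rw [if_pos hrj]
    · simp [hrj]
  rw [hRHS]
  unfold lag
  rw [hmM, neg_neg]
  rw [← Finset.sum_range_reflect (fun q =>
    ((max k j).choose (min k j - q) : ℂ) * (a * b) ^ q / (q.factorial : ℂ)) (min k j + 1)]
  simp only [Finset.mul_sum, Finset.sum_div]
  refine Finset.sum_congr rfl fun r hr => ?_
  simp only [Finset.mem_range] at hr
  have hr' : r ≤ min k j := by omega
  have e0 : min k j + 1 - 1 - r = min k j - r := by omega
  rw [e0]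
  exact gterm_pointwise a b b' hab k j (min k j) (max k j) r hr' (min_le_max)

lemma slice_summable (a b b' : ℂ) (k r : ℕ) :
    Summable (fun j => ‖gterm a b b' k r j‖) := by
  rw [← summable_nat_add_iff r]
  have heq : ∀ j : ℕ, gterm a b b' k r (j + r)
      = (a * b') ^ r * (a * b) ^ (-(r : ℤ)) * b ^ k /
          ((r.factorial : ℂ) * ((k - r).factorial : ℂ)) * ((a * b') ^ j / (j.factorial : ℂ)) := by
    intro j
    unfold gterm
    rw [if_pos (by omega : r ≤ j + r)]
    rw [show j + r - r = j from by omega, pow_add]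
    ring
  simp only [heq, norm_mul]
  apply Summable.mul_left
  exact (NormedSpace.expSeries_div_summable (a * b')).norm

lemma slice_tsum (a b b' : ℂ) (k r : ℕ) :
    ∑' j, gterm a b b' k r j
      = (a * b') ^ r * (a * b) ^ (-(r : ℤ)) * b ^ k /
          ((r.factorial : ℂ) * ((k - r).factorial : ℂ)) * Complex.exp (a * b') := by
  have hsum : Summable (fun j => gterm a b b' k r j) :=
    (slice_summable a b b' k r).of_norm
  rw [← Summable.sum_add_tsum_nat_add r hsum]
  have hz : ∑ j ∈ Finset.range r, gterm a b b' k r j = 0 := by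
    apply Finset.sum_eq_zero
    intro j hj
    simp only [Finset.mem_range] at hj
    unfold gterm
    rw [if_neg (by omega)]
  rw [hz, zero_add]
  have heq : ∀ j : ℕ, gterm a b b' k r (j + r)
      = (a * b') ^ r * (a * b) ^ (-(r : ℤ)) * b ^ k /
          ((r.factorial : ℂ) * ((k - r).factorial : ℂ)) * ((a * b') ^ j / (j.factorial : ℂ)) := by
    intro j
    unfold gterm
    rw [if_pos (by omega : r ≤ j + r)]
    rw [show j + r - r = j from by omega, pow_add]
    ring
  simp only [heq]
  rw [tsum_mul_left]
  congr 1
  rw [Complex.exp_eq_exp_ℂ, NormedSpace.exp_eq_tsum_div]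

lemma final_sum (k : ℕ) (a b b' : ℂ) (ha : a ≠ 0) (hb : b ≠ 0) :
    ∑ r ∈ Finset.range (k + 1),
      (a * b') ^ r * (a * b) ^ (-(r : ℤ)) * b ^ k /
        ((r.factorial : ℂ) * ((k - r).factorial : ℂ))
      = (b + b') ^ k / (k.factorial : ℂ) := by
  rw [add_comm b b', add_pow, Finset.sum_div]
  refine Finset.sum_congr rfl fun r hr => ?_
  simp only [Finset.mem_range] at hr
  obtain ⟨s, rfl⟩ : ∃ s, k = r + s := ⟨k - r, by omega⟩
  rw [show r + s - r = s from by omega]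
  have hch : ((r + s).choose r : ℂ) * (r.factorial : ℂ) * (s.factorial : ℂ)
      = ((r + s).factorial : ℂ) := by
    have := Nat.choose_mul_factorial_mul_factorial (show r ≤ r + s by omega)
    rw [show r + s - r = s from by omega] at this
    exact_mod_cast congrArg (Nat.cast : ℕ → ℂ) this
  have hz : (a * b) ^ (-(r : ℤ)) = ((a * b) ^ r)⁻¹ := by rw [zpow_neg, zpow_natCast]
  rw [hz, pow_add]
  have h1 : ((r + s).factorial : ℂ) ≠ 0 := Nat.cast_ne_zero.2 (Nat.factorial_ne_zero _)
  have h2 : (r.factorial : ℂ) ≠ 0 := Nat.cast_ne_zero.2 (Nat.factorial_ne_zero _)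
  have h3 : (s.factorial : ℂ) ≠ 0 := Nat.cast_ne_zero.2 (Nat.factorial_ne_zero _)
  have hp : (a * b) ^ r ≠ 0 := pow_ne_zero _ (mul_ne_zero ha hb)
  field_simp
  rw [← hch]
  ring

/-- For every `k` and nonzero complex `a, b` and any complex `b′`, the series
`b^k·Σ_{j=0}^∞ (ab′)^j·(ab)^{−min(k,j)}·L_{min(k,j)}^{|k−j|}(−ab)/max(k,j)!`
converges absolutely and equals `e^{ab′}·(b+b′)^k/k!`. -/
theorem g_row_zero (k : ℕ) (a b b' : ℂ) (ha : a ≠ 0) (hb : b ≠ 0) :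
    Summable (fun j : ℕ => ‖b ^ k * ((a * b') ^ j * (a * b) ^ (-(min k j : ℤ)) *
      lag (min k j) (Nat.dist k j) (-(a * b)) / ((max k j).factorial : ℂ))‖) ∧
    b ^ k * ∑' j : ℕ, (a * b') ^ j * (a * b) ^ (-(min k j : ℤ)) *
        lag (min k j) (Nat.dist k j) (-(a * b)) / ((max k j).factorial : ℂ) =
      Complex.exp (a * b') * (b + b') ^ k / (k.factorial : ℂ) := by
  have hab : a * b ≠ 0 := mul_ne_zero ha hb
  have hterm := term_eq k a b b' hab
  have hsumnorm : Summable (fun j : ℕ => ‖b ^ k * ((a * b') ^ j * (a * b) ^ (-(min k j : ℤ)) *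
      lag (min k j) (Nat.dist k j) (-(a * b)) / ((max k j).factorial : ℂ))‖) := by
    refine Summable.of_nonneg_of_le (fun j => norm_nonneg _) (fun j => ?_)
      (summable_sum fun r (_ : r ∈ Finset.range (k + 1)) => slice_summable a b b' k r)
    rw [hterm j]
    exact norm_sum_le _ _
  refine ⟨hsumnorm, ?_⟩
  have hsum : Summable (fun j : ℕ => b ^ k * ((a * b') ^ j * (a * b) ^ (-(min k j : ℤ)) *
      lag (min k j) (Nat.dist k j) (-(a * b)) / ((max k j).factorial : ℂ))) :=
    hsumnorm.of_norm
  rw [← tsum_mul_left]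
  calc ∑' j : ℕ, b ^ k * ((a * b') ^ j * (a * b) ^ (-(min k j : ℤ)) *
        lag (min k j) (Nat.dist k j) (-(a * b)) / ((max k j).factorial : ℂ))
      = ∑' j : ℕ, ∑ r ∈ Finset.range (k + 1), gterm a b b' k r j := by
        exact tsum_congr hterm
    _ = ∑ r ∈ Finset.range (k + 1), ∑' j : ℕ, gterm a b b' k r j := by
        exact Summable.tsum_finsetSum fun r _ => (slice_summable a b b' k r).of_norm
    _ = ∑ r ∈ Finset.range (k + 1),
          (a * b') ^ r * (a * b) ^ (-(r : ℤ)) * b ^ k /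
            ((r.factorial : ℂ) * ((k - r).factorial : ℂ)) * Complex.exp (a * b') := by
        exact Finset.sum_congr rfl fun r _ => slice_tsum a b b' k r
    _ = Complex.exp (a * b') * (b + b') ^ k / (k.factorial : ℂ) := by
        rw [← Finset.sum_mul, final_sum k a b b' ha hb]
        ring
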